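/- The lattice φ = { m·(0,3,1) + n·(0,−1,3) + k·(2,1,2) : m, n, k ∈ ℤ } ⊆ ℤ³ is a subgroup of ℤ³ of index 20, and every nonzero vector of φ has squared Euclidean norm at least 9. -/

import Mathlib

theorem dfcc_D2_9 :
    ∃ H : AddSubgroup (ℤ × ℤ × ℤ),
      (H : Set (ℤ × ℤ × ℤ)) =
        {v | ∃ m n k : ℤ, v = (2 * k, 3 * m - n + k, m + 3 * n + 2 * k)} ∧
      H.index = 20 ∧
      ∀ v : ℤ × ℤ × ℤ, v ∈ H → v ≠ 0 →
        v.1 ^ 2 + v.2.1 ^ 2 + v.2.2 ^ 2 ≥ 9 := by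
  -- the homomorphism whose kernel is the lattice
  let f : ℤ × ℤ × ℤ →+ ZMod 20 :=
    { toFun := fun v => ((5 * v.1 - 6 * v.2.1 - 2 * v.2.2 : ℤ) : ZMod 20)
      map_zero' := by simp
      map_add' := by
        rintro ⟨x1,x2,x3⟩ ⟨y1,y2,y3⟩
        show ((_ : ℤ) : ZMod 20) = _
        simp only [Prod.mk_add_mk]
        push_cast
        ring }
  refine ⟨f.ker, ?_, ?_, ?_⟩
  · ext v
    obtain ⟨a, b, c⟩ := v
    simp only [AddSubgroup.coe_toAddSubmonoid, SetLike.mem_coe, AddMonoidHom.mem_ker,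
      Set.mem_setOf_eq, f, AddMonoidHom.coe_mk, ZeroHom.coe_mk]
    rw [ZMod.intCast_zmod_eq_zero_iff_dvd]
    constructor
    · rintro ⟨t, ht⟩
      have h2 : (2 : ℤ) ∣ a := by omega
      obtain ⟨k, hk⟩ := h2
      have h10 : (10 : ℤ) ∣ (3 * b + c - 5 * k) := by omega
      obtain ⟨m, hm⟩ := h10
      have h10' : (10 : ℤ) ∣ (3 * c - b - 5 * k) := by omega
      obtain ⟨n, hn⟩ := h10'
      exact ⟨m, n, k, by simp only [Prod.mk.injEq]; omega⟩
    · rintro ⟨m, n, k, h⟩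
      obtain ⟨rfl, rfl, rfl⟩ := Prod.mk.injEq .. ▸ (by
        simpa [Prod.ext_iff] using h : a = 2 * k ∧ b = 3 * m - n + k ∧ c = m + 3 * n + 2 * k)
      exact ⟨-m, by ring⟩
  · have hsurj : Function.Surjective f := by
      intro x
      refine ⟨((x.val : ℤ), 0, 2 * (x.val : ℤ)), ?_⟩
      show ((5 * (x.val : ℤ) - 6 * 0 - 2 * (2 * (x.val : ℤ)) : ℤ) : ZMod 20) = x
      push_cast
      rw [ZMod.natCast_val, ZMod.cast_id]
      ring
    rw [AddSubgroup.index_ker, AddMonoidHom.range_eq_top.mpr hsurj]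
    simp [Nat.card_eq_fintype_card]
  · rintro ⟨a, b, c⟩ hv hne
    have hdvd : (20 : ℤ) ∣ 5 * a - 6 * b - 2 * c := by
      have h0 : ((5 * a - 6 * b - 2 * c : ℤ) : ZMod 20) = 0 := hv
      rwa [ZMod.intCast_zmod_eq_zero_iff_dvd] at h0
    obtain ⟨t, ht⟩ := hdvd
    have hne' : ¬(a = 0 ∧ b = 0 ∧ c = 0) := by
      simpa [Prod.ext_iff] using hne
    by_contra hlt
    push_neg at hlt
    simp only [pow_two] at hlt
    have ha8 : a * a ≤ 8 := by nlinarith [mul_self_nonneg b, mul_self_nonneg c]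
    have hb8 : b * b ≤ 8 := by nlinarith [mul_self_nonneg a, mul_self_nonneg c]
    have hc8 : c * c ≤ 8 := by nlinarith [mul_self_nonneg a, mul_self_nonneg b]
    have bound : ∀ x : ℤ, x * x ≤ 8 → -2 ≤ x ∧ x ≤ 2 := by
      intro x hx
      constructor
      · by_contra hcon
        push_neg at hcon
        have h3 : x ≤ -3 := by omega
        nlinarith
      · by_contra hcon
        push_neg at hcon
        have h3 : 3 ≤ x := by omega
        nlinarith
    obtain ⟨ha1, ha2⟩ := bound a ha8
    obtain ⟨hb1, hb2⟩ := bound b hb8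
    obtain ⟨hc1, hc2⟩ := bound c hc8
    interval_cases a <;> interval_cases b <;> interval_cases c <;> omega
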